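/- arXiv:2307.09652 — 3 statements merged into one kernel-verified Lean document; each statement's English description precedes it below -/
import Mathlib

section
/- There exist bimatrix games in which the gap between the exploiter's worst-case best-response value p_e = max_{y∈Δ(m)} min_{x∈X*} xᵀBy and its security value max_{y∈Δ(m)} min_{x∈Δ(n)} xᵀBy is arbitrarily large: specifically, for every c > 0 there is a 3×2 game (A,B) with p_e ≥ c and security value ≤ 0. -/
open Matrix

noncomputable def pay {n m : ℕ} (A : Matrix (Fin n) (Fin m) ℝ)
    (x : Fin n → ℝ) (y : Fin m → ℝ) : ℝ := x ⬝ᵥ (A *ᵥ y)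

noncomputable def worst {n m : ℕ} (A : Matrix (Fin n) (Fin m) ℝ) (x : Fin n → ℝ) : ℝ :=
  sInf (pay A x '' stdSimplex ℝ (Fin m))

noncomputable def maximinSet {n m : ℕ} (A : Matrix (Fin n) (Fin m) ℝ) : Set (Fin n → ℝ) :=
  {x | x ∈ stdSimplex ℝ (Fin n) ∧ ∀ x' ∈ stdSimplex ℝ (Fin n), worst A x' ≤ worst A x}

noncomputable def worstOver {n m : ℕ} (X : Set (Fin n → ℝ))
    (B : Matrix (Fin n) (Fin m) ℝ) (y : Fin m → ℝ) : ℝ :=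
  sInf ((fun x => pay B x y) '' X)

/-- `p_e = max_{y ∈ Δ(m)} min_{x ∈ X*} xᵀ B y`. -/
noncomputable def pE {n m : ℕ} (A B : Matrix (Fin n) (Fin m) ℝ) : ℝ :=
  sSup ((fun y => worstOver (maximinSet A) B y) '' stdSimplex ℝ (Fin m))

/-- The exploiter's unrestricted security value `max_{y ∈ Δ(m)} min_{x ∈ Δ(n)} xᵀ B y`. -/
noncomputable def securityE {n m : ℕ} (B : Matrix (Fin n) (Fin m) ℝ) : ℝ :=
  sSup ((fun y => worstOver (stdSimplex ℝ (Fin n)) B y) '' stdSimplex ℝ (Fin m))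

section aux

variable {c : ℝ}

lemma mem_simplex3 {x : Fin 3 → ℝ} (h : x ∈ stdSimplex ℝ (Fin 3)) :
    0 ≤ x 0 ∧ 0 ≤ x 1 ∧ 0 ≤ x 2 ∧ x 0 + x 1 + x 2 = 1 := by
  obtain ⟨h1, h2⟩ := h
  refine ⟨h1 0, h1 1, h1 2, ?_⟩
  simpa [Fin.sum_univ_three] using h2

lemma mem_simplex2 {y : Fin 2 → ℝ} (h : y ∈ stdSimplex ℝ (Fin 2)) :
    0 ≤ y 0 ∧ 0 ≤ y 1 ∧ y 0 + y 1 = 1 := by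
  obtain ⟨h1, h2⟩ := h
  refine ⟨h1 0, h1 1, ?_⟩
  simpa [Fin.sum_univ_two] using h2

lemma pay_eval (M : Matrix (Fin 3) (Fin 2) ℝ) (x : Fin 3 → ℝ) (y : Fin 2 → ℝ) :
    pay M x y = x 0 * (M 0 0 * y 0 + M 0 1 * y 1) + x 1 * (M 1 0 * y 0 + M 1 1 * y 1)
      + x 2 * (M 2 0 * y 0 + M 2 1 * y 1) := by
  simp [pay, dotProduct, Matrix.mulVec, Fin.sum_univ_three, Fin.sum_univ_two]

end aux

/-- the gap between `p_e` and the exploiter's security value can be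
arbitrarily large: for every `c > 0` there is a `3×2` game with `p_e ≥ c` and
security value `≤ 0`. -/
theorem pE_security_gap_unbounded :
    ∀ c : ℝ, 0 < c → ∃ A B : Matrix (Fin 3) (Fin 2) ℝ,
      c ≤ pE A B ∧ securityE B ≤ 0 := by
  intro c hc
  set A : Matrix (Fin 3) (Fin 2) ℝ := !![c, c; c, c; -1, -1] with hA
  set B : Matrix (Fin 3) (Fin 2) ℝ := !![2*c, -1; c, -1; -1, 0] with hB
  refine ⟨A, B, ?_, ?_⟩
  · -- c ≤ pE A B
    -- the maximin strategy x* = (1,0,0)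
    set xs : Fin 3 → ℝ := ![1, 0, 0] with hxs
    have hxs_mem : xs ∈ stdSimplex ℝ (Fin 3) := by
      constructor
      · intro i; fin_cases i <;> norm_num [hxs]
      · simp [hxs, Fin.sum_univ_three]
    -- pay A x y = c*(x0+x1) - x2 for y in the simplex
    have payA : ∀ x : Fin 3 → ℝ, ∀ y ∈ stdSimplex ℝ (Fin 2),
        pay A x y = c * (x 0 + x 1) - x 2 := by
      intro x y hy
      obtain ⟨_, _, hsum⟩ := mem_simplex2 hy
      rw [pay_eval]
      simp only [hA]
      norm_num [Matrix.cons_val_two]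
      linear_combination (c * x 0 + c * x 1 - x 2) * hsum
    have simplex2_ne : (stdSimplex ℝ (Fin 2)).Nonempty := by
      refine ⟨![1, 0], ?_, ?_⟩
      · intro i; fin_cases i <;> norm_num
      · simp [Fin.sum_univ_two]
    have worstA : ∀ x : Fin 3 → ℝ, worst A x = c * (x 0 + x 1) - x 2 := by
      intro x
      have : pay A x '' stdSimplex ℝ (Fin 2) = {c * (x 0 + x 1) - x 2} := by
        apply Set.eq_singleton_iff_nonempty_unique_mem.mpr
        constructor
        · obtain ⟨y, hy⟩ := simplex2_ne
          exact ⟨pay A x y, ⟨y, hy, rfl⟩⟩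
        · rintro v ⟨y, hy, rfl⟩; exact payA x y hy
      rw [worst, this, csInf_singleton]
    have hxs_max : xs ∈ maximinSet A := by
      refine ⟨hxs_mem, fun x' hx' => ?_⟩
      obtain ⟨h0, h1, h2, hsum⟩ := mem_simplex3 hx'
      rw [worstA, worstA]
      simp only [hxs]
      norm_num [Matrix.cons_val_two]
      nlinarith
    -- every maximin strategy has x2 = 0 hence x0 + x1 = 1
    have hchar : ∀ x ∈ maximinSet A, x 2 = 0 ∧ x 0 + x 1 = 1 := by
      rintro x ⟨hxmem, hxopt⟩
      obtain ⟨h0, h1, h2, hsum⟩ := mem_simplex3 hxmem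
      have := hxopt xs hxs_mem
      rw [worstA, worstA] at this
      simp only [hxs] at this
      norm_num [Matrix.cons_val_two] at this
      constructor <;> nlinarith
    -- take y* = (1,0)
    set ys : Fin 2 → ℝ := ![1, 0] with hys
    have hys_mem : ys ∈ stdSimplex ℝ (Fin 2) := by
      constructor
      · intro i; fin_cases i <;> norm_num [hys]
      · simp [hys, Fin.sum_univ_two]
    have hworstOver : c ≤ worstOver (maximinSet A) B ys := by
      apply le_csInf
      · exact ⟨pay B xs ys, ⟨xs, hxs_max, rfl⟩⟩
      · rintro v ⟨x, hx, rfl⟩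
        obtain ⟨hz, hsum⟩ := hchar x hx
        obtain ⟨h0, h1, h2, _⟩ := mem_simplex3 hx.1
        show c ≤ pay B x ys
        rw [pay_eval]
        simp only [hB, hys]
        norm_num [Matrix.cons_val_two]
        nlinarith
    refine le_trans hworstOver ?_
    apply le_csSup
    · -- bounded above by 2*c
      refine ⟨2 * c, ?_⟩
      rintro v ⟨y, hy, rfl⟩
      obtain ⟨hy0, hy1, hsum⟩ := mem_simplex2 hy
      have hbdd : BddBelow ((fun x => pay B x y) '' (maximinSet A)) := by
        refine ⟨-1, ?_⟩
        rintro v ⟨x, hx, rfl⟩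
        obtain ⟨h0, h1, h2, hs⟩ := mem_simplex3 hx.1
        show (-1 : ℝ) ≤ pay B x y
        rw [pay_eval]
        simp only [hB]
        norm_num [Matrix.cons_val_two]
        nlinarith [mul_nonneg h0 hy0, mul_nonneg h0 hy1, mul_nonneg h1 hy0, mul_nonneg h1 hy1, mul_nonneg h2 hy0, mul_nonneg h2 hy1, mul_nonneg (mul_nonneg hc.le h0) hy0, mul_nonneg (mul_nonneg hc.le h1) hy0]
      refine le_trans (csInf_le hbdd ⟨xs, hxs_max, rfl⟩) ?_
      show pay B xs y ≤ 2 * c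
      rw [pay_eval]
      simp only [hB, hxs]
      norm_num [Matrix.cons_val_two]
      nlinarith
    · exact ⟨ys, hys_mem, rfl⟩
  · -- securityE B ≤ 0
    apply Real.sSup_le
    · rintro v ⟨y, hy, rfl⟩
      obtain ⟨hy0, hy1, hsum⟩ := mem_simplex2 hy
      set e3 : Fin 3 → ℝ := ![0, 0, 1] with he3
      have he3_mem : e3 ∈ stdSimplex ℝ (Fin 3) := by
        constructor
        · intro i; fin_cases i <;> norm_num [he3]
        · simp [he3, Fin.sum_univ_three]
      have hbdd : BddBelow ((fun x => pay B x y) '' stdSimplex ℝ (Fin 3)) := by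
        refine ⟨-1, ?_⟩
        rintro v ⟨x, hx, rfl⟩
        obtain ⟨h0, h1, h2, hs⟩ := mem_simplex3 hx
        show (-1 : ℝ) ≤ pay B x y
        rw [pay_eval]
        simp only [hB]
        norm_num [Matrix.cons_val_two]
        nlinarith [mul_nonneg h0 hy0, mul_nonneg h0 hy1, mul_nonneg h1 hy0, mul_nonneg h1 hy1, mul_nonneg h2 hy0, mul_nonneg h2 hy1, mul_nonneg (mul_nonneg hc.le h0) hy0, mul_nonneg (mul_nonneg hc.le h1) hy0]
      refine le_trans (csInf_le hbdd ⟨e3, he3_mem, rfl⟩) ?_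
      show pay B e3 y ≤ 0
      rw [pay_eval]
      simp only [hB, he3]
      norm_num [Matrix.cons_val_two]
      nlinarith
    · exact le_rfl
end

section
/- The exploiter's problem max_{y∈Δ(m)} min_{x∈X*} xᵀBy has the same optimal value as the single linear program: maximize z*·1ᵀw − α over y ∈ Δ(m), w ∈ ℝ^m_{≥0}, α ∈ ℝ subject to α + e_iᵀBy − e_iᵀAw ≥ 0 for all i ∈ [n]. -/
open Matrix

noncomputable def payPure {n m : ℕ} (A : Matrix (Fin n) (Fin m) ℝ)
    (x : Fin n → ℝ) (j : Fin m) : ℝ := x ⬝ᵥ (A *ᵥ Pi.single j 1)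

/-- `z* = max_{x ∈ Δ(n)} min_{j ∈ [m]} (xᵀA)_j`. -/
noncomputable def zStar {n m : ℕ} (A : Matrix (Fin n) (Fin m) ℝ) : ℝ :=
  sSup ((fun x => sInf (Set.range (payPure A x))) '' stdSimplex ℝ (Fin n))

/-- The polytope `X* = {x ∈ Δ(n) : z* ≤ xᵀAe_j ∀ j}` of victim maximin strategies. -/
noncomputable def Xstar {n m : ℕ} (A : Matrix (Fin n) (Fin m) ℝ) : Set (Fin n → ℝ) :=
  {x | x ∈ stdSimplex ℝ (Fin n) ∧ ∀ j : Fin m, zStar A ≤ payPure A x j}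

section AuxDuality
open Finset
open scoped InnerProductSpace



section Caratheodory

variable {ι E : Type*} [Fintype ι] [AddCommGroup E] [Module ℝ E]

lemma cone_carath_aux (g : ι → E) (t : Finset ι) :
    ∀ (c : ι → ℝ), (∀ i, 0 ≤ c i) → (∀ i ∉ t, c i = 0) →
    ∃ (s : Finset ι) (d : ι → ℝ), (∀ i, 0 ≤ d i) ∧ (∀ i ∉ s, d i = 0) ∧
      LinearIndependent ℝ (fun i : s => g i) ∧ ∑ i, d i • g i = ∑ i, c i • g i := by
  classical
  induction t using Finset.strongInduction with
  | _ t ih =>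
    intro c hc hsupp
    by_cases hli : LinearIndependent ℝ (fun i : t => g i)
    · exact ⟨t, c, hc, hsupp, hli, rfl⟩
    obtain ⟨e, hesum, i₀, hi₀⟩ := Fintype.not_linearIndependent_iff.1 hli
    -- extend e to ι, with the right sign
    have key : ∀ e' : ι → ℝ, (∀ i ∉ t, e' i = 0) → (∑ i, e' i • g i = 0) →
        ∀ i₁ ∈ t, 0 < e' i₁ →
        ∃ (s : Finset ι) (d : ι → ℝ), (∀ i, 0 ≤ d i) ∧ (∀ i ∉ s, d i = 0) ∧
          LinearIndependent ℝ (fun i : s => g i) ∧ ∑ i, d i • g i = ∑ i, c i • g i := by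
      intro e' he's he'sum i₁ hi₁t hi₁pos
      set tp := t.filter (fun i => 0 < e' i) with htp
      have htpne : tp.Nonempty := ⟨i₁, by simp [htp, hi₁t, hi₁pos]⟩
      obtain ⟨i₂, hi₂tp, hi₂min⟩ := tp.exists_min_image (fun i => c i / e' i) htpne
      have hi₂pos : 0 < e' i₂ := (Finset.mem_filter.1 hi₂tp).2
      have hi₂t : i₂ ∈ t := (Finset.mem_filter.1 hi₂tp).1
      set τ := c i₂ / e' i₂ with hτ
      have hτ0 : 0 ≤ τ := div_nonneg (hc i₂) hi₂pos.le
      set c' : ι → ℝ := fun i => c i - τ * e' i with hc'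
      have hc'0 : ∀ i, 0 ≤ c' i := by
        intro i
        rcases le_or_gt (e' i) 0 with h | h
        · have : τ * e' i ≤ 0 := mul_nonpos_of_nonneg_of_nonpos hτ0 h
          simp only [hc']; linarith [hc i]
        · have hitp : i ∈ tp := by
            refine Finset.mem_filter.2 ⟨?_, h⟩
            by_contra hit
            exact absurd (he's i hit) h.ne'
          have h2 := hi₂min i hitp
          have h3 : τ * e' i ≤ c i := (le_div_iff₀ h).1 h2
          simp only [hc']; linarith
      have hc'supp : ∀ i ∉ t.erase i₂, c' i = 0 := by
        intro i hi
        by_cases h : i = i₂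
        · simp [hc', h, hτ, div_mul_cancel₀ _ hi₂pos.ne']
        · have hit : i ∉ t := fun hit => hi (Finset.mem_erase.2 ⟨h, hit⟩)
          simp [hc', hsupp i hit, he's i hit]
      have hc'sum : ∑ i, c' i • g i = ∑ i, c i • g i := by
        have : ∑ i, (τ * e' i) • g i = τ • ∑ i, e' i • g i := by
          rw [Finset.smul_sum]; exact Finset.sum_congr rfl fun i _ => (smul_smul τ (e' i) (g i)).symm
        simp only [hc', sub_smul, Finset.sum_sub_distrib, this, he'sum, smul_zero, sub_zero]
      exact ih (t.erase i₂) (Finset.erase_ssubset hi₂t) c' hc'0 hc'supp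
        |>.imp (fun s ⟨d, h1, h2, h3, h4⟩ => ⟨d, h1, h2, h3, h4.trans hc'sum⟩)
    set e' : ι → ℝ := fun i => if h : i ∈ t then e ⟨i, h⟩ else 0 with he'
    have he's : ∀ i ∉ t, e' i = 0 := fun i hi => by simp [he', hi]
    have he'sum : ∑ i, e' i • g i = 0 := by
      rw [← Finset.sum_subset (Finset.subset_univ t) (fun i _ hi => by simp [he's i hi])]
      rw [← Finset.sum_attach t (fun i => e' i • g i)]
      simpa [he'] using hesum
    rcases hi₀.lt_or_gt with h | h
    · refine key (fun i => -(e' i)) (fun i hi => by simp [he's i hi]) ?_ i₀ i₀.2 ?_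
      · simp only [neg_smul, Finset.sum_neg_distrib, he'sum, neg_zero]
      · simp only [he', dif_pos i₀.2, neg_pos]; simpa using h
    · exact key e' he's he'sum i₀ i₀.2 (by simp only [he', dif_pos i₀.2]; simpa using h)

lemma cone_carath (g : ι → E) (c : ι → ℝ) (hc : ∀ i, 0 ≤ c i) :
    ∃ (s : Finset ι) (d : ι → ℝ), (∀ i, 0 ≤ d i) ∧ (∀ i ∉ s, d i = 0) ∧
      LinearIndependent ℝ (fun i : s => g i) ∧ ∑ i, d i • g i = ∑ i, c i • g i :=
  cone_carath_aux g Finset.univ c hc (fun i hi => absurd (Finset.mem_univ i) hi)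

end Caratheodory

section Cone
variable {ι E : Type*} [Fintype ι] [NormedAddCommGroup E] [InnerProductSpace ℝ E]
  [FiniteDimensional ℝ E]

def coneSet (g : ι → E) : Set E :=
  {x | ∃ c : ι → ℝ, (∀ i, 0 ≤ c i) ∧ x = ∑ i, c i • g i}

lemma isClosed_coneSet (g : ι → E) : IsClosed (coneSet g) := by
  classical
  have : coneSet g = ⋃ (s : Finset ι), ⋃ (_ : LinearIndependent ℝ (fun i : s => g i)),
      (fun d : s → ℝ => ∑ i : s, d i • g i) '' {d | ∀ i, 0 ≤ d i} := by
    ext x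
    simp only [Set.mem_iUnion, Set.mem_image, Set.mem_setOf_eq, coneSet]
    constructor
    · rintro ⟨c, hc, rfl⟩
      obtain ⟨s, d, hd0, hds, hli, hsum⟩ := cone_carath g c hc
      refine ⟨s, hli, fun i => d i, fun i => hd0 i, ?_⟩
      rw [← hsum, ← Finset.sum_subset (Finset.subset_univ s) (fun i _ hi => by simp [hds i hi]),
        ← Finset.sum_attach s (fun i => d i • g i)]
      rfl
    · rintro ⟨s, hli, d, hd0, rfl⟩
      refine ⟨fun i => if h : i ∈ s then d ⟨i, h⟩ else 0, fun i => by dsimp only; split <;> [exact hd0 _; rfl], ?_⟩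
      rw [← Finset.sum_subset (Finset.subset_univ s) (fun i _ hi => by simp [hi]),
        ← Finset.sum_attach s (fun i => (if h : i ∈ s then d ⟨i, h⟩ else 0) • g i)]
      exact Finset.sum_congr rfl fun i _ => by simp [i.2]
  rw [this]
  refine isClosed_iUnion_of_finite fun s => isClosed_iUnion_of_finite fun hli => ?_
  have horth : IsClosed {d : s → ℝ | ∀ i, 0 ≤ d i} := by
    have : {d : s → ℝ | ∀ i, 0 ≤ d i} = ⋂ i, {d | 0 ≤ d i} := by ext; simp
    rw [this]
    exact isClosed_iInter fun i => isClosed_le continuous_const (continuous_apply i)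
  set L : (s → ℝ) →ₗ[ℝ] E :=
    { toFun := fun d => ∑ i : s, d i • g i
      map_add' := fun a b => by simp [add_smul, Finset.sum_add_distrib]
      map_smul' := fun r a => by simp [Finset.smul_sum, smul_smul] } with hL
  have hker : LinearMap.ker L = ⊥ := by
    rw [LinearMap.ker_eq_bot']
    intro d hd
    have := Fintype.linearIndependent_iff.1 hli d hd
    funext i; exact this i
  exact (L.isClosedEmbedding_of_injective hker).isClosedMap _ horth

def coneCone (g : ι → E) : ConvexCone ℝ E where
  carrier := coneSet g
  smul_mem' := by
    rintro r hr x ⟨c, hc, rfl⟩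
    exact ⟨fun i => r * c i, fun i => mul_nonneg hr.le (hc i),
      by rw [Finset.smul_sum]; exact Finset.sum_congr rfl fun i _ => smul_smul r (c i) (g i)⟩
  add_mem' := by
    rintro x ⟨c, hc, rfl⟩ y ⟨c', hc', rfl⟩
    exact ⟨fun i => c i + c' i, fun i => add_nonneg (hc i) (hc' i),
      by simp [add_smul, Finset.sum_add_distrib]⟩

open scoped InnerProductSpace in
lemma farkas [CompleteSpace E] (g : ι → E) (b : E)
    (h : ∀ y : E, (∀ i, 0 ≤ ⟪g i, y⟫_ℝ) → 0 ≤ ⟪b, y⟫_ℝ) :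
    ∃ c : ι → ℝ, (∀ i, 0 ≤ c i) ∧ b = ∑ i, c i • g i := by
  classical
  by_contra hb
  have hbmem : b ∉ coneCone g := fun ⟨c, hc, hcb⟩ => hb ⟨c, hc, hcb⟩
  obtain ⟨y, hy1, hy2⟩ : ∃ y, (∀ x ∈ coneCone g, 0 ≤ ⟪x, y⟫_ℝ) ∧ ⟪y, b⟫_ℝ < 0 := by
    obtain ⟨y, hy1, hy2⟩ := ProperCone.hyperplane_separation' (x₀ := b)
      (⟨(coneCone g).toPointedCone ⟨fun _ => 0, fun _ => le_rfl, by simp⟩, isClosed_coneSet g⟩ :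
        ProperCone ℝ E) hbmem
    exact ⟨y, fun x hx => hy1 x hx, by rwa [real_inner_comm]⟩
  have hgy : ∀ i, 0 ≤ ⟪g i, y⟫_ℝ := by
    intro i
    refine hy1 (g i) ⟨fun j => if j = i then 1 else 0, fun j => by positivity, ?_⟩
    simp [ite_smul]
  have := h y hgy
  rw [real_inner_comm] at hy2
  linarith
end Cone

lemma farkas_coords {ι κ : Type*} [Fintype ι] [Fintype κ] (g : ι → κ → ℝ) (b : κ → ℝ)
    (h : ∀ y : κ → ℝ, (∀ i, 0 ≤ ∑ k, g i k * y k) → 0 ≤ ∑ k, b k * y k) :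
    ∃ c : ι → ℝ, (∀ i, 0 ≤ c i) ∧ ∀ k, b k = ∑ i, c i * g i k := by
  classical
  set φ := (WithLp.linearEquiv 2 ℝ (κ → ℝ)).symm with hφ
  have hinner : ∀ u v : κ → ℝ, ⟪φ u, φ v⟫_ℝ = ∑ k, u k * v k := by
    intro u v
    rw [PiLp.inner_apply]
    refine Finset.sum_congr rfl fun k _ => ?_
    simp [hφ, mul_comm]
  obtain ⟨c, hc, hsum⟩ := farkas (fun i => φ (g i)) (φ b) (by
    intro y hy
    have hyy : φ ((WithLp.linearEquiv 2 ℝ (κ → ℝ)) y) = y := by simp [hφ]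
    have := h ((WithLp.linearEquiv 2 ℝ (κ → ℝ)) y) (fun i => by
      have h2 := hy i
      rw [← hinner, hyy]; exact h2)
    rw [← hinner, hyy] at this
    exact this)
  refine ⟨c, hc, fun k => ?_⟩
  have : b = (WithLp.linearEquiv 2 ℝ (κ → ℝ)) (∑ i, c i • φ (g i)) := by
    rw [← hsum]; simp [hφ]
  rw [this]
  simp only [map_sum, _root_.map_smul]
  have h3 : ∀ i, (WithLp.linearEquiv 2 ℝ (κ → ℝ)) (φ (g i)) = g i := fun i => by simp [hφ]
  simp only [h3, Finset.sum_apply, Pi.smul_apply, smul_eq_mul]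

lemma lp_duality {ι κ : Type*} [Fintype ι] [Fintype κ] [DecidableEq ι]
    (M : κ → ι → ℝ) (b : κ → ℝ) (c : ι → ℝ) (p : ℝ)
    (h : ∀ (x : ι → ℝ) (t : ℝ), (∀ i, 0 ≤ x i) → 0 ≤ t →
      (∀ j, t * b j ≤ ∑ i, M j i * x i) → t * p ≤ ∑ i, c i * x i) :
    ∃ u : κ → ℝ, (∀ j, 0 ≤ u j) ∧ (∀ i, ∑ j, u j * M j i ≤ c i) ∧ p ≤ ∑ j, u j * b j := by
  classical
  set g : κ ⊕ (ι ⊕ Unit) → (ι ⊕ Unit) → ℝ :=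
    Sum.elim (fun j => Sum.elim (M j) (fun _ => -b j))
      (Sum.elim (fun i' => Sum.elim (fun i => if i = i' then 1 else 0) 0)
        (fun _ => Sum.elim 0 1)) with hg
  obtain ⟨cc, hcc0, hccsum⟩ := farkas_coords g (Sum.elim c (fun _ => -p)) (by
    intro y hy
    set x : ι → ℝ := fun i => y (Sum.inl i) with hx
    set t : ℝ := y (Sum.inr ()) with ht
    have hx0 : ∀ i, 0 ≤ x i := by
      intro i
      have := hy (Sum.inr (Sum.inl i))
      simpa [hg, Fintype.sum_sum_type, ite_mul, Finset.sum_ite_eq'] using this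
    have ht0 : 0 ≤ t := by
      have := hy (Sum.inr (Sum.inr ()))
      simpa [hg, Fintype.sum_sum_type] using this
    have hcons : ∀ j, t * b j ≤ ∑ i, M j i * x i := by
      intro j
      have := hy (Sum.inl j)
      simp only [hg, Sum.elim_inl, Sum.elim_inr, Fintype.sum_sum_type, Fintype.sum_unique] at this
      have hd : y (Sum.inr default) = t := rfl
      rw [hd] at this
      nlinarith [this]
    have := h x t hx0 ht0 hcons
    simp only [Fintype.sum_sum_type, Sum.elim_inl, Sum.elim_inr, Fintype.sum_unique]
    have hd : y (Sum.inr default) = t := rfl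
    rw [hd]
    nlinarith [this])
  refine ⟨fun j => cc (Sum.inl j), fun j => hcc0 _, fun i => ?_, ?_⟩
  · have := hccsum (Sum.inl i)
    simp only [hg, Fintype.sum_sum_type, Sum.elim_inl, Sum.elim_inr, Fintype.sum_unique,
      mul_ite, mul_one, mul_zero, Pi.zero_apply, Finset.sum_ite_eq', Finset.sum_ite_eq, Finset.mem_univ,
      if_true] at this
    have h2 := hcc0 (Sum.inr (Sum.inl i))
    nlinarith [this, h2]
  · have := hccsum (Sum.inr ())
    simp only [hg, Fintype.sum_sum_type, Sum.elim_inl, Sum.elim_inr, Fintype.sum_unique,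
      Pi.zero_apply, Pi.one_apply, mul_zero, mul_one, Finset.sum_const_zero, add_zero, zero_add, mul_neg] at this
    have h2 := hcc0 (Sum.inr (Sum.inr ()))
    have h3 : ∑ j, cc (Sum.inl j) * b j = p + cc (Sum.inr (Sum.inr ())) := by
      have h4 : ∑ j, -(cc (Sum.inl j) * b j) = -∑ j, cc (Sum.inl j) * b j :=
        Finset.sum_neg_distrib _
      linarith [this, h4]
    linarith

section App
variable {n m : ℕ} (A B : Matrix (Fin n) (Fin m) ℝ)

lemma payPure_eq (x : Fin n → ℝ) (j : Fin m) : payPure A x j = ∑ i, x i * A i j := by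
  simp [payPure, dotProduct, mulVec, Pi.single_apply, mul_ite]

lemma pay_eq (x : Fin n → ℝ) (q : Fin m → ℝ) : pay B x q = ∑ i, x i * (B *ᵥ q) i := rfl

lemma mulVec_eq (w : Fin m → ℝ) (i : Fin n) : (A *ᵥ w) i = ∑ j, A i j * w j := rfl

lemma continuous_payPure (j : Fin m) : Continuous (fun x => payPure A x j) := by
  simp only [payPure_eq]
  exact continuous_finset_sum _ fun i _ => (continuous_apply i).mul continuous_const

lemma continuous_pay (q : Fin m → ℝ) : Continuous (fun x => pay B x q) := by
  simp only [pay_eq]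
  exact continuous_finset_sum _ fun i _ => (continuous_apply i).mul continuous_const

lemma sInf_range_payPure (hm : 0 < m) (x : Fin n → ℝ) :
    sInf (Set.range (payPure A x)) =
      Finset.univ.inf' (by haveI : Nonempty (Fin m) := ⟨⟨0, hm⟩⟩; exact Finset.univ_nonempty)
        (payPure A x) := by
  haveI : Nonempty (Fin m) := ⟨⟨0, hm⟩⟩
  rw [Finset.inf'_eq_csInf_image, ← Set.image_univ, ← Finset.coe_univ]

lemma xstar_isCompact : IsCompact (Xstar A) := by
  have hclosed : IsClosed (Xstar A) := by
    have : Xstar A = stdSimplex ℝ (Fin n) ∩ ⋂ j, {x | zStar A ≤ payPure A x j} := by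
      ext x; simp [Xstar, Set.mem_iInter]
    rw [this]
    exact (isCompact_stdSimplex ℝ _).isClosed.inter
      (isClosed_iInter fun j => isClosed_le continuous_const (continuous_payPure A j))
  exact (isCompact_stdSimplex ℝ _).of_isClosed_subset hclosed fun x hx => hx.1

lemma xstar_nonempty (hn : 0 < n) (hm : 0 < m) : (Xstar A).Nonempty := by
  haveI : Nonempty (Fin m) := ⟨⟨0, hm⟩⟩
  have hne : (Finset.univ : Finset (Fin m)).Nonempty := Finset.univ_nonempty
  set F : (Fin n → ℝ) → ℝ := fun x => Finset.univ.inf' hne (payPure A x) with hF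
  have hcont : Continuous F := by
    rw [continuous_iff_continuousAt]
    intro x
    exact ContinuousAt.finset_inf'_apply hne fun j _ => (continuous_payPure A j).continuousAt
  obtain ⟨x₀, hx₀s, hx₀max'⟩ := (isCompact_stdSimplex ℝ (Fin n)).exists_isMaxOn
    ⟨Pi.single ⟨0, hn⟩ 1, single_mem_stdSimplex ℝ _⟩ hcont.continuousOn
  have hx₀max : ∀ x ∈ stdSimplex ℝ (Fin n), F x ≤ F x₀ := fun x hx => hx₀max' hx
  have himg : (fun x => sInf (Set.range (payPure A x))) '' stdSimplex ℝ (Fin n) =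
      F '' stdSimplex ℝ (Fin n) :=
    Set.image_congr fun x _ => by rw [sInf_range_payPure A hm x]
  have hz : zStar A = F x₀ := by
    rw [zStar, himg]
    exact IsGreatest.csSup_eq ⟨Set.mem_image_of_mem F hx₀s, by
      rintro a ⟨x, hx, rfl⟩; exact hx₀max x hx⟩
  exact ⟨x₀, hx₀s, fun j => by rw [hz]; exact Finset.inf'_le _ (Finset.mem_univ j)⟩

lemma mem_simplex_le_one {x : Fin n → ℝ} (hx : x ∈ stdSimplex ℝ (Fin n)) (i : Fin n) :
    x i ≤ 1 := by
  rw [← hx.2]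
  exact Finset.single_le_sum (fun i _ => hx.1 i) (Finset.mem_univ i)

lemma pay_le_bound {x : Fin n → ℝ} {q : Fin m → ℝ} (hx : x ∈ stdSimplex ℝ (Fin n))
    (hq : q ∈ stdSimplex ℝ (Fin m)) : pay B x q ≤ ∑ i, ∑ j, |B i j| := by
  rw [pay_eq]
  refine Finset.sum_le_sum fun i _ => ?_
  rw [mulVec_eq, Finset.mul_sum]
  refine Finset.sum_le_sum fun j _ => ?_
  have h1 := hx.1 i; have h2 := mem_simplex_le_one hx i
  have h3 := hq.1 j; have h4 := mem_simplex_le_one hq j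
  have h5 := le_abs_self (B i j); have h6 := neg_abs_le (B i j)
  have h7 := abs_nonneg (B i j)
  nlinarith [mul_nonneg h1 h3, mul_nonneg (mul_nonneg h1 h3) (sub_nonneg.2 h5),
    mul_nonneg (sub_nonneg.2 h2) h3, mul_nonneg h1 (sub_nonneg.2 h4)]

/-- weak duality -/
lemma weak_duality {q : Fin m → ℝ} (hq : q ∈ stdSimplex ℝ (Fin m)) (w : Fin m → ℝ) (α : ℝ)
    (hw : ∀ j, 0 ≤ w j) (hfeas : ∀ i, 0 ≤ α + (B *ᵥ q) i - (A *ᵥ w) i)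
    {x : Fin n → ℝ} (hx : x ∈ Xstar A) :
    zStar A * (∑ j, w j) - α ≤ pay B x q := by
  have h1 : ∑ i, x i * ((A *ᵥ w) i - α) ≤ pay B x q := by
    rw [pay_eq]
    exact Finset.sum_le_sum fun i _ => mul_le_mul_of_nonneg_left (by linarith [hfeas i]) (hx.1.1 i)
  have h2 : ∑ i, x i * ((A *ᵥ w) i - α) = (∑ j, w j * ∑ i, x i * A i j) - α := by
    have hsum : ∑ i, x i * α = α := by
      rw [← Finset.sum_mul, hx.1.2, one_mul]
    simp only [mul_sub, Finset.sum_sub_distrib, hsum]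
    congr 1
    simp only [mulVec_eq, Finset.mul_sum]
    rw [Finset.sum_comm]
    exact Finset.sum_congr rfl fun j _ => Finset.sum_congr rfl fun i _ => by ring
  have h3 : zStar A * (∑ j, w j) ≤ ∑ j, w j * ∑ i, x i * A i j := by
    rw [Finset.mul_sum]
    refine Finset.sum_le_sum fun j _ => ?_
    have := hx.2 j
    rw [payPure_eq] at this
    calc zStar A * w j = w j * zStar A := by ring
      _ ≤ w j * ∑ i, x i * A i j := mul_le_mul_of_nonneg_left this (hw j)
  linarith

end App

lemma strong_duality {n m : ℕ} (A B : Matrix (Fin n) (Fin m) ℝ) (hn : 0 < n) (hm : 0 < m)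
    {q : Fin m → ℝ} (hq : q ∈ stdSimplex ℝ (Fin m)) :
    ∃ (w : Fin m → ℝ) (α : ℝ), (∀ j, 0 ≤ w j) ∧ (∀ i, 0 ≤ α + (B *ᵥ q) i - (A *ᵥ w) i) ∧
      sInf ((fun x => pay B x q) '' Xstar A) ≤ zStar A * (∑ j, w j) - α := by
  classical
  obtain ⟨xq, hxq, hxqmin'⟩ := (xstar_isCompact A).exists_isMinOn (xstar_nonempty A hn hm)
    (continuous_pay B q).continuousOn
  have hxqmin : ∀ x ∈ Xstar A, pay B xq q ≤ pay B x q := fun x hx => hxqmin' hx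
  set p := pay B xq q with hp
  have hbdd : BddBelow ((fun x => pay B x q) '' Xstar A) :=
    ((xstar_isCompact A).image_of_continuousOn (continuous_pay B q).continuousOn).bddBelow
  have hpv : sInf ((fun x => pay B x q) '' Xstar A) ≤ p :=
    csInf_le hbdd ⟨xq, hxq, rfl⟩
  set M : (Fin m ⊕ Unit ⊕ Unit) → Fin n → ℝ :=
    Sum.elim (fun j i => A i j) (Sum.elim (fun _ _ => 1) (fun _ _ => -1)) with hM
  set bb : (Fin m ⊕ Unit ⊕ Unit) → ℝ :=
    Sum.elim (fun _ => zStar A) (Sum.elim (fun _ => 1) (fun _ => -1)) with hbb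
  obtain ⟨u, hu0, hu1, hu2⟩ := lp_duality M bb (fun i => (B *ᵥ q) i) p (by
    intro x t hx0 ht0 hcons
    have hc1 : ∀ j : Fin m, t * zStar A ≤ ∑ i, A i j * x i := fun j => by
      have := hcons (Sum.inl j); simpa [hM, hbb] using this
    have hc2 : t ≤ ∑ i, x i := by
      have := hcons (Sum.inr (Sum.inl ())); simpa [hM, hbb] using this
    have hc3 : ∑ i, x i ≤ t := by
      have := hcons (Sum.inr (Sum.inr ()))
      simp only [hM, hbb, Sum.elim_inr, mul_neg, mul_one] at this
      have h4 : ∑ i, -1 * x i = -∑ i, x i := by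
        rw [← Finset.sum_neg_distrib]; exact Finset.sum_congr rfl fun i _ => by ring
      rw [h4] at this; linarith
    have hsumx : ∑ i, x i = t := le_antisymm hc3 hc2
    rcases eq_or_lt_of_le ht0 with ht | ht
    · have hx00 : ∀ i, x i = 0 := by
        intro i
        have := (Finset.sum_eq_zero_iff_of_nonneg (fun i _ => hx0 i)).1
          (by rw [hsumx, ← ht]) i (Finset.mem_univ i)
        exact this
      simp [hx00, ← ht]
    · set x' : Fin n → ℝ := fun i => t⁻¹ * x i with hx'
      have hx's : x' ∈ stdSimplex ℝ (Fin n) := by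
        constructor
        · exact fun i => mul_nonneg (inv_nonneg.2 ht0) (hx0 i)
        · rw [← Finset.mul_sum, hsumx, inv_mul_cancel₀ ht.ne']
      have hx'X : x' ∈ Xstar A := by
        refine ⟨hx's, fun j => ?_⟩
        rw [payPure_eq]
        have : zStar A = t⁻¹ * (t * zStar A) := by field_simp
        rw [this]
        calc t⁻¹ * (t * zStar A) ≤ t⁻¹ * ∑ i, A i j * x i :=
              mul_le_mul_of_nonneg_left (hc1 j) (inv_nonneg.2 ht0)
          _ = ∑ i, x' i * A i j := by
              rw [Finset.mul_sum]; exact Finset.sum_congr rfl fun i _ => by simp [hx']; ring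
      have hple := hxqmin x' hx'X
      rw [pay_eq] at hple
      have : ∑ i, x' i * (B *ᵥ q) i = t⁻¹ * ∑ i, (B *ᵥ q) i * x i := by
        rw [Finset.mul_sum]; exact Finset.sum_congr rfl fun i _ => by simp [hx']; ring
      rw [this] at hple
      calc t * p ≤ t * (t⁻¹ * ∑ i, (B *ᵥ q) i * x i) :=
            mul_le_mul_of_nonneg_left hple ht0
        _ = ∑ i, (B *ᵥ q) i * x i := by field_simp)
  refine ⟨fun j => u (Sum.inl j), u (Sum.inr (Sum.inr ())) - u (Sum.inr (Sum.inl ())),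
    fun j => hu0 _, fun i => ?_, ?_⟩
  · have := hu1 i
    simp only [hM, Fintype.sum_sum_type, Fintype.sum_unique, Sum.elim_inl, Sum.elim_inr,
      mul_one, mul_neg] at this
    have hAw : (A *ᵥ fun j => u (Sum.inl j)) i = ∑ j, u (Sum.inl j) * A i j := by
      rw [mulVec_eq]; exact Finset.sum_congr rfl fun j _ => by ring
    rw [hAw]
    have hd1 : u (Sum.inr (Sum.inl default)) = u (Sum.inr (Sum.inl ())) := rfl
    have hd2 : u (Sum.inr (Sum.inr default)) = u (Sum.inr (Sum.inr ())) := rfl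
    rw [hd1, hd2] at this
    linarith
  · refine hpv.trans ?_
    refine hu2.trans (le_of_eq ?_)
    simp only [hbb, Fintype.sum_sum_type, Fintype.sum_unique, Sum.elim_inl, Sum.elim_inr,
      mul_one, mul_neg]
    have hd1 : u (Sum.inr (Sum.inl default)) = u (Sum.inr (Sum.inl ())) := rfl
    have hd2 : u (Sum.inr (Sum.inr default)) = u (Sum.inr (Sum.inr ())) := rfl
    rw [hd1, hd2]
    have : ∑ j, u (Sum.inl j) * zStar A = zStar A * ∑ j, u (Sum.inl j) := by
      rw [Finset.mul_sum]; exact Finset.sum_congr rfl fun j _ => by ring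
    rw [this]; ring


end AuxDuality

/-- the exploiter's max-min problem `max_{y ∈ Δ(m)} min_{x ∈ X*} xᵀBy`
has the same optimal value as the single LP maximizing `z*·1ᵀw − α` over
`y ∈ Δ(m)`, `w ≥ 0`, `α ∈ ℝ` subject to `α + e_iᵀBy − e_iᵀAw ≥ 0` for all `i`. -/
theorem exploiter_LP_value {n m : ℕ} (hn : 0 < n) (hm : 0 < m)
    (A B : Matrix (Fin n) (Fin m) ℝ) :
    sSup ((fun y => sInf ((fun x => pay B x y) '' Xstar A)) '' stdSimplex ℝ (Fin m)) =
    sSup {v : ℝ | ∃ y ∈ stdSimplex ℝ (Fin m), ∃ w : Fin m → ℝ, ∃ α : ℝ,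
      (∀ j, 0 ≤ w j) ∧ (∀ i : Fin n, 0 ≤ α + (B *ᵥ y) i - (A *ᵥ w) i) ∧
      v = zStar A * (∑ j, w j) - α} := by
  classical
  set pv : (Fin m → ℝ) → ℝ := fun q => sInf ((fun x => pay B x q) '' Xstar A) with hpv
  set L := pv '' stdSimplex ℝ (Fin m) with hL
  set R := {v : ℝ | ∃ y ∈ stdSimplex ℝ (Fin m), ∃ w : Fin m → ℝ, ∃ α : ℝ,
      (∀ j, 0 ≤ w j) ∧ (∀ i : Fin n, 0 ≤ α + (B *ᵥ y) i - (A *ᵥ w) i) ∧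
      v = zStar A * (∑ j, w j) - α} with hR
  obtain ⟨x₀, hx₀⟩ := xstar_nonempty A hn hm
  set C := ∑ i, ∑ j, |B i j| with hC
  have hXne : (Xstar A).Nonempty := ⟨x₀, hx₀⟩
  -- pv q ≤ C on the simplex
  have hpvle : ∀ q ∈ stdSimplex ℝ (Fin m), pv q ≤ C := by
    intro q hq
    have hbdd : BddBelow ((fun x => pay B x q) '' Xstar A) :=
      ((xstar_isCompact A).image_of_continuousOn (continuous_pay B q).continuousOn).bddBelow
    exact (csInf_le hbdd ⟨x₀, hx₀, rfl⟩).trans (pay_le_bound B hx₀.1 hq)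
  -- every element of R is ≤ pv of its witness
  have hRle : ∀ v ∈ R, ∃ q ∈ stdSimplex ℝ (Fin m), v ≤ pv q := by
    rintro v ⟨q, hq, w, α, hw, hfeas, rfl⟩
    refine ⟨q, hq, ?_⟩
    refine le_csInf (hXne.image _) ?_
    rintro b ⟨x, hx, rfl⟩
    exact weak_duality A B hq w α hw hfeas hx
  have hLb : ∀ a ∈ L, a ≤ C := by rintro a ⟨q, hq, rfl⟩; exact hpvle q hq
  have hRb : ∀ v ∈ R, v ≤ C := by
    intro v hv
    obtain ⟨q, hq, hle⟩ := hRle v hv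
    exact hle.trans (hpvle q hq)
  have hLne : L.Nonempty := ⟨pv (Pi.single ⟨0, hm⟩ 1), Set.mem_image_of_mem _
    (single_mem_stdSimplex ℝ _)⟩
  have hq₀ : (Pi.single ⟨0, hm⟩ 1 : Fin m → ℝ) ∈ stdSimplex ℝ (Fin m) :=
    single_mem_stdSimplex ℝ _
  obtain ⟨w₀, α₀, hw₀, hfeas₀, hval₀⟩ := strong_duality A B hn hm hq₀
  have hRne : R.Nonempty := ⟨zStar A * (∑ j, w₀ j) - α₀, Pi.single ⟨0, hm⟩ 1, hq₀,
    w₀, α₀, hw₀, hfeas₀, rfl⟩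
  refine le_antisymm ?_ ?_
  · refine csSup_le hLne ?_
    rintro a ⟨q, hq, rfl⟩
    obtain ⟨w, α, hw, hfeas, hval⟩ := strong_duality A B hn hm hq
    exact hval.trans (le_csSup ⟨C, fun v hv => hRb v hv⟩ ⟨q, hq, w, α, hw, hfeas, rfl⟩)
  · refine csSup_le hRne ?_
    intro v hv
    obtain ⟨q, hq, hle⟩ := hRle v hv
    exact hle.trans (le_csSup ⟨C, fun a ha => hLb a ha⟩ (Set.mem_image_of_mem _ hq))
end

section
/- If a pair of Markovian policies (π*, ν*) is a VISER solution for every stage game (h, s) of a finite-horizon Markov game (i.e., it is Markov-perfect VISER), then it is also a VISER solution of the whole game viewed from the initial distribution, i.e., π* ∈ argmax_π min_ν V^{π,ν}_v and ν* best-responds in the worst case to the set of Markov-perfect maximin victim policies. -/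
open Matrix

/-- A finite-horizon two-player Markov game (victim reward `R`, exploiter reward `Re`,
transition kernel `P`, horizon `H`). Only steps `h < H` are relevant. -/
structure MarkovGame (S : Type) [Fintype S] (n m : ℕ) where
  H : ℕ
  R : ℕ → S → Fin n → Fin m → ℝ
  Re : ℕ → S → Fin n → Fin m → ℝ
  P : ℕ → S → Fin n → Fin m → S → ℝ
  P_nonneg : ∀ h s a b s', 0 ≤ P h s a b s'
  P_sum : ∀ h s a b, ∑ s', P h s a b s' = 1

variable {S : Type} [Fintype S] {n m : ℕ}

/-- Expected cumulative reward (w.r.t. the reward function `RW`) from step `h`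
onward starting at `s`, under Markovian policies `π, ν`. -/
noncomputable def Val (G : MarkovGame S n m) (RW : ℕ → S → Fin n → Fin m → ℝ)
    (π : ℕ → S → Fin n → ℝ) (ν : ℕ → S → Fin m → ℝ) (h : ℕ) (s : S) : ℝ :=
  if hH : h < G.H then
    ∑ a, ∑ b, π h s a * ν h s b *
      (RW h s a b + ∑ s', G.P h s a b s' * Val G RW π ν (h + 1) s')
  else 0
termination_by G.H - h
decreasing_by omega

/-- The set of Markovian victim policies. -/
def ViP (S : Type) (n : ℕ) : Set (ℕ → S → Fin n → ℝ) :=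
  {π | ∀ h s, π h s ∈ stdSimplex ℝ (Fin n)}

/-- The set of Markovian exploiter policies. -/
def ExP (S : Type) (m : ℕ) : Set (ℕ → S → Fin m → ℝ) :=
  {ν | ∀ h s, ν h s ∈ stdSimplex ℝ (Fin m)}

/-- The victim's maximin stage value `V*_{hv}(s)`. -/
noncomputable def VstarV (G : MarkovGame S n m) (h : ℕ) (s : S) : ℝ :=
  sSup ((fun π => sInf ((fun ν => Val G G.R π ν h s) '' ExP S m)) '' ViP S n)

/-- `Π*_{hs}`: victim policies that are maximin for the stage game at `(h, s)`. -/
noncomputable def PiStar (G : MarkovGame S n m) (h : ℕ) (s : S) :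
    Set (ℕ → S → Fin n → ℝ) :=
  {π | π ∈ ViP S n ∧ ∀ π' ∈ ViP S n,
    sInf ((fun ν => Val G G.R π' ν h s) '' ExP S m) ≤
      sInf ((fun ν => Val G G.R π ν h s) '' ExP S m)}

/-- `Π*_{hs} ∩ ⋂_{k > h, s'} Π*_{ks'}`: maximin at `(h,s)` and at all later stages. -/
noncomputable def TildePi (G : MarkovGame S n m) (h : ℕ) (s : S) :
    Set (ℕ → S → Fin n → ℝ) :=
  PiStar G h s ∩ ⋂ (k : ℕ) (_ : h < k) (s' : S), PiStar G k s'

/-- `N*_{hs}`: exploiter policies best-responding in the worst case over `TildePi`. -/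
noncomputable def NStar (G : MarkovGame S n m) (h : ℕ) (s : S) :
    Set (ℕ → S → Fin m → ℝ) :=
  {ν | ν ∈ ExP S m ∧ ∀ ν' ∈ ExP S m,
    sInf ((fun π => Val G G.Re π ν' h s) '' TildePi G h s) ≤
      sInf ((fun π => Val G G.Re π ν h s) '' TildePi G h s)}

namespace MPV

/-! ### generic helpers -/

lemma dirac_mem {k : ℕ} (i : Fin k) :
    (fun j => if j = i then (1:ℝ) else 0) ∈ stdSimplex ℝ (Fin k) := by
  constructor
  · intro j; dsimp only; split <;> norm_num
  · simp

lemma sInf_range_le {k : ℕ} (f : Fin k → ℝ) (b : Fin k) : sInf (Set.range f) ≤ f b :=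
  csInf_le (Set.finite_range f).bddBelow ⟨b, rfl⟩

lemma le_sInf_range {k : ℕ} [Nonempty (Fin k)] (f : Fin k → ℝ) (c : ℝ)
    (hf : ∀ b, c ≤ f b) : c ≤ sInf (Set.range f) :=
  le_csInf (Set.range_nonempty f) (by rintro x ⟨b, rfl⟩; exact hf b)

lemma exists_min_range {k : ℕ} [Nonempty (Fin k)] (f : Fin k → ℝ) :
    ∃ b, sInf (Set.range f) = f b ∧ ∀ b', f b ≤ f b' := by
  obtain ⟨b, -, hb⟩ := Finset.exists_min_image Finset.univ f
    ⟨Classical.arbitrary _, Finset.mem_univ _⟩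
  exact ⟨b, le_antisymm (sInf_range_le f b)
    (le_sInf_range f _ (fun b' => hb b' (Finset.mem_univ _))),
    fun b' => hb b' (Finset.mem_univ _)⟩

lemma abs_sInf_le {A : Set ℝ} (hne : A.Nonempty) {B : ℝ} (hB : ∀ x ∈ A, |x| ≤ B) :
    |sInf A| ≤ B := by
  obtain ⟨x, hx⟩ := hne
  have hlb : ∀ y ∈ A, -B ≤ y := fun y hy => neg_le_of_abs_le (hB y hy)
  have h1 : -B ≤ sInf A := le_csInf ⟨x, hx⟩ hlb
  have h2 : sInf A ≤ B := (csInf_le ⟨-B, hlb⟩ hx).trans (le_of_abs_le (hB x hx))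
  rw [abs_le]; exact ⟨h1, h2⟩

/-- rearrange a bilinear double sum, pulling out the `q`-variable -/
lemma sum_bilin_right {p : Fin n → ℝ} {q : Fin m → ℝ} {X : Fin n → Fin m → ℝ} :
    ∑ a, ∑ b, p a * q b * X a b = ∑ b, q b * ∑ a, p a * X a b := by
  rw [Finset.sum_comm]
  refine Finset.sum_congr rfl fun b _ => ?_
  rw [Finset.mul_sum]
  refine Finset.sum_congr rfl fun a _ => by ring

lemma sum_bilin_left {p : Fin n → ℝ} {q : Fin m → ℝ} {X : Fin n → Fin m → ℝ} :
    ∑ a, ∑ b, p a * q b * X a b = ∑ a, p a * ∑ b, q b * X a b := by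
  refine Finset.sum_congr rfl fun a _ => ?_
  rw [Finset.mul_sum]
  refine Finset.sum_congr rfl fun b _ => by ring

lemma avg_le {k : ℕ} {p : Fin k → ℝ} (hp : p ∈ stdSimplex ℝ (Fin k))
    {x : Fin k → ℝ} {C : ℝ} (h : ∀ i, x i ≤ C) : ∑ i, p i * x i ≤ C := by
  calc ∑ i, p i * x i ≤ ∑ i, p i * C :=
        Finset.sum_le_sum fun i _ => mul_le_mul_of_nonneg_left (h i) (hp.1 i)
    _ = C := by rw [← Finset.sum_mul, hp.2, one_mul]

lemma le_avg {k : ℕ} {p : Fin k → ℝ} (hp : p ∈ stdSimplex ℝ (Fin k))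
    {x : Fin k → ℝ} {C : ℝ} (h : ∀ i, C ≤ x i) : C ≤ ∑ i, p i * x i := by
  calc C = ∑ i, p i * C := by rw [← Finset.sum_mul, hp.2, one_mul]
    _ ≤ ∑ i, p i * x i :=
        Finset.sum_le_sum fun i _ => mul_le_mul_of_nonneg_left (h i) (hp.1 i)

lemma bilin_bound {p : Fin n → ℝ} (hp : p ∈ stdSimplex ℝ (Fin n))
    {q : Fin m → ℝ} (hq : q ∈ stdSimplex ℝ (Fin m))
    {X : Fin n → Fin m → ℝ} {C : ℝ} (hX : ∀ a b, |X a b| ≤ C) :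
    |∑ a, ∑ b, p a * q b * X a b| ≤ C := by
  calc |∑ a, ∑ b, p a * q b * X a b| ≤ ∑ a, |∑ b, p a * q b * X a b| :=
        Finset.abs_sum_le_sum_abs _ _
    _ ≤ ∑ a, ∑ b, |p a * q b * X a b| :=
        Finset.sum_le_sum fun a _ => Finset.abs_sum_le_sum_abs _ _
    _ = ∑ a, ∑ b, p a * q b * |X a b| := by
        refine Finset.sum_congr rfl fun a _ => Finset.sum_congr rfl fun b _ => ?_
        rw [abs_mul, abs_mul, abs_of_nonneg (hp.1 a), abs_of_nonneg (hq.1 b)]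
    _ ≤ C := by
        rw [sum_bilin_left]
        exact avg_le hp fun a => avg_le hq fun b => hX a b

/-! ### unfolding `Val` -/

lemma Val_pos (G : MarkovGame S n m) (RW) (π) (ν) {h : ℕ} (s : S) (hh : h < G.H) :
    Val G RW π ν h s = ∑ a, ∑ b, π h s a * ν h s b *
      (RW h s a b + ∑ s', G.P h s a b s' * Val G RW π ν (h + 1) s') := by
  rw [Val]; simp [hh]

lemma Val_neg (G : MarkovGame S n m) (RW) (π) (ν) {h : ℕ} (s : S) (hh : ¬ h < G.H) :
    Val G RW π ν h s = 0 := by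
  rw [Val]; simp [hh]

/-! ### the worst-case (victim) value of a fixed victim policy -/

noncomputable def Wv (G : MarkovGame S n m) (π : ℕ → S → Fin n → ℝ) (h : ℕ) (s : S) : ℝ :=
  if h < G.H then
    sInf (Set.range fun b : Fin m => ∑ a, π h s a *
      (G.R h s a b + ∑ s', G.P h s a b s' * Wv G π (h + 1) s'))
  else 0
termination_by G.H - h
decreasing_by omega

lemma Wv_pos (G : MarkovGame S n m) (π) {h : ℕ} (s : S) (hh : h < G.H) :
    Wv G π h s = sInf (Set.range fun b : Fin m => ∑ a, π h s a *
      (G.R h s a b + ∑ s', G.P h s a b s' * Wv G π (h + 1) s')) := by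
  rw [Wv]; simp [hh]

lemma Wv_neg (G : MarkovGame S n m) (π) {h : ℕ} (s : S) (hh : ¬ h < G.H) :
    Wv G π h s = 0 := by rw [Wv]; simp [hh]

/-! ### reward bounds -/

noncomputable def Mk (G : MarkovGame S n m) (RW : ℕ → S → Fin n → Fin m → ℝ) (k : ℕ) : ℝ :=
  sSup (Set.range fun x : S × Fin n × Fin m => |RW k x.1 x.2.1 x.2.2|)

lemma Mk_nonneg (G : MarkovGame S n m) (RW) (k : ℕ) : 0 ≤ Mk G RW k :=
  Real.sSup_nonneg (by rintro x ⟨y, rfl⟩; exact abs_nonneg _)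

lemma abs_le_Mk (G : MarkovGame S n m) (RW) (k : ℕ) (s : S) (a : Fin n) (b : Fin m) :
    |RW k s a b| ≤ Mk G RW k :=
  le_csSup (Set.finite_range _).bddAbove ⟨(s, a, b), rfl⟩

noncomputable def Bnd (G : MarkovGame S n m) (RW : ℕ → S → Fin n → Fin m → ℝ) (h : ℕ) : ℝ :=
  ∑ k ∈ Finset.Ico h G.H, Mk G RW k

lemma Bnd_nonneg (G : MarkovGame S n m) (RW) (h : ℕ) : 0 ≤ Bnd G RW h :=
  Finset.sum_nonneg fun k _ => Mk_nonneg G RW k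

lemma Bnd_succ (G : MarkovGame S n m) (RW) {h : ℕ} (hh : h < G.H) :
    Bnd G RW h = Mk G RW h + Bnd G RW (h + 1) := by
  unfold Bnd
  rw [← Finset.sum_Ico_consecutive _ (Nat.le_succ h) hh]
  congr 1
  rw [Nat.Ico_succ_singleton, Finset.sum_singleton]

lemma val_bound (G : MarkovGame S n m) (RW) {π} (hπ : π ∈ ViP S n) {ν} (hν : ν ∈ ExP S m) :
    ∀ h s, |Val G RW π ν h s| ≤ Bnd G RW h := by
  have main : ∀ d h s, G.H ≤ h + d → |Val G RW π ν h s| ≤ Bnd G RW h := by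
    intro d
    induction d with
    | zero => intro h s hd; rw [Val_neg G RW π ν s (by omega)]; simpa using Bnd_nonneg G RW h
    | succ d ih =>
      intro h s hd
      by_cases hh : h < G.H
      · rw [Val_pos G RW π ν s hh, Bnd_succ G RW hh]
        refine bilin_bound (hπ h s) (hν h s) fun a b => ?_
        calc |RW h s a b + ∑ s', G.P h s a b s' * Val G RW π ν (h + 1) s'|
            ≤ |RW h s a b| + |∑ s', G.P h s a b s' * Val G RW π ν (h + 1) s'| := abs_add_le _ _
          _ ≤ Mk G RW h + Bnd G RW (h + 1) := by
              refine add_le_add (abs_le_Mk G RW h s a b) ?_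
              calc |∑ s', G.P h s a b s' * Val G RW π ν (h + 1) s'|
                  ≤ ∑ s', |G.P h s a b s' * Val G RW π ν (h + 1) s'| :=
                    Finset.abs_sum_le_sum_abs _ _
                _ ≤ ∑ s', G.P h s a b s' * Bnd G RW (h + 1) := by
                    refine Finset.sum_le_sum fun s' _ => ?_
                    rw [abs_mul, abs_of_nonneg (G.P_nonneg h s a b s')]
                    exact mul_le_mul_of_nonneg_left (ih (h+1) s' (by omega)) (G.P_nonneg h s a b s')
                _ = Bnd G RW (h + 1) := by rw [← Finset.sum_mul, G.P_sum, one_mul]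
      · rw [Val_neg G RW π ν s hh]; simpa using Bnd_nonneg G RW h
  intro h s; exact main (G.H - h + 1) h s (by omega)


variable {G : MarkovGame S n m}

/-! ### the worst case value `Wv` vs `Val` -/

lemma Wv_le_val (hm : 0 < m) {π} (hπ : π ∈ ViP S n) {ν} (hν : ν ∈ ExP S m) :
    ∀ h s, Wv G π h s ≤ Val G G.R π ν h s := by
  haveI : Nonempty (Fin m) := ⟨⟨0, hm⟩⟩
  have main : ∀ d h s, G.H ≤ h + d → Wv G π h s ≤ Val G G.R π ν h s := by
    intro d
    induction d with
    | zero =>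
      intro h s hd
      rw [Wv_neg G π s (by omega), Val_neg G G.R π ν s (by omega)]
    | succ d ih =>
      intro h s hd
      by_cases hh : h < G.H
      · set g : Fin m → ℝ := fun b => ∑ a, π h s a *
          (G.R h s a b + ∑ s', G.P h s a b s' * Wv G π (h + 1) s') with hg
        calc Wv G π h s = sInf (Set.range g) := Wv_pos G π s hh
          _ ≤ ∑ b, ν h s b * g b := le_avg (hν h s) (fun b => sInf_range_le g b)
          _ = ∑ a, ∑ b, π h s a * ν h s b *
              (G.R h s a b + ∑ s', G.P h s a b s' * Wv G π (h + 1) s') :=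
            sum_bilin_right.symm
          _ ≤ ∑ a, ∑ b, π h s a * ν h s b *
              (G.R h s a b + ∑ s', G.P h s a b s' * Val G G.R π ν (h + 1) s') := by
            refine Finset.sum_le_sum fun a _ => Finset.sum_le_sum fun b _ => ?_
            refine mul_le_mul_of_nonneg_left ?_ (mul_nonneg ((hπ h s).1 a) ((hν h s).1 b))
            refine add_le_add le_rfl (Finset.sum_le_sum fun s' _ => ?_)
            exact mul_le_mul_of_nonneg_left (ih (h+1) s' (by omega)) (G.P_nonneg h s a b s')
          _ = Val G G.R π ν h s := (Val_pos G G.R π ν s hh).symm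
      · rw [Wv_neg G π s hh, Val_neg G G.R π ν s hh]
  intro h s; exact main (G.H - h + 1) h s (by omega)

lemma exists_br (G : MarkovGame S n m) (hm : 0 < m) (π : ℕ → S → Fin n → ℝ) :
    ∃ νh ∈ ExP S m, ∀ h s, Val G G.R π νh h s = Wv G π h s := by
  haveI : Nonempty (Fin m) := ⟨⟨0, hm⟩⟩
  set g : ℕ → S → Fin m → ℝ := fun h s b => ∑ a, π h s a *
    (G.R h s a b + ∑ s', G.P h s a b s' * Wv G π (h + 1) s') with hg
  have hsel : ∀ (h : ℕ) (s : S), ∃ b, sInf (Set.range (g h s)) = g h s b ∧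
      ∀ b', g h s b ≤ g h s b' := fun h s => exists_min_range (g h s)
  choose bm hbm1 _ using hsel
  refine ⟨fun h s b => if b = bm h s then 1 else 0, fun h s => dirac_mem _, ?_⟩
  have main : ∀ d h s, G.H ≤ h + d →
      Val G G.R π (fun h s b => if b = bm h s then 1 else 0) h s = Wv G π h s := by
    intro d
    induction d with
    | zero => intro h s hd; rw [Val_neg _ _ _ _ s (by omega), Wv_neg _ _ s (by omega)]
    | succ d ih =>
      intro h s hd
      by_cases hh : h < G.H
      · have hIH : ∀ s', Val G G.R π (fun h s b => if b = bm h s then 1 else 0) (h+1) s'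
            = Wv G π (h+1) s' := fun s' => ih (h+1) s' (by omega)
        rw [Val_pos _ _ _ _ s hh]
        simp only [hIH]
        rw [sum_bilin_right]
        have : ∀ b : Fin m, (if b = bm h s then (1:ℝ) else 0) * g h s b
            = (if b = bm h s then g h s b else 0) := by
          intro b; split <;> ring
        calc (∑ b, (if b = bm h s then (1:ℝ) else 0) * ∑ a, π h s a *
              (G.R h s a b + ∑ s', G.P h s a b s' * Wv G π (h + 1) s'))
            = ∑ b, (if b = bm h s then g h s b else 0) := by
              refine Finset.sum_congr rfl fun b _ => ?_; rw [← this b]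
          _ = g h s (bm h s) := by rw [Finset.sum_ite_eq' Finset.univ (bm h s) (g h s)]; simp
          _ = sInf (Set.range (g h s)) := (hbm1 h s).symm
          _ = Wv G π h s := (Wv_pos G π s hh).symm
      · rw [Val_neg _ _ _ _ s hh, Wv_neg _ _ s hh]
  intro h s; exact main (G.H - h + 1) h s (by omega)

lemma sInf_val_eq (hm : 0 < m) {π} (hπ : π ∈ ViP S n) (h : ℕ) (s : S) :
    sInf ((fun ν => Val G G.R π ν h s) '' ExP S m) = Wv G π h s := by
  obtain ⟨νh, hνhE, hνh⟩ := exists_br G hm π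
  refine le_antisymm (csInf_le ⟨Wv G π h s, ?_⟩ ⟨νh, hνhE, hνh h s⟩)
    (le_csInf ⟨_, ⟨νh, hνhE, rfl⟩⟩ ?_) <;>
  · rintro x ⟨ν, hν, rfl⟩
    exact Wv_le_val hm hπ hν h s

section Char

variable {πs : ℕ → S → Fin n → ℝ}

lemma Wv_le_Wv_star (hm : 0 < m) (hπs : ∀ h s, πs ∈ PiStar G h s)
    {π} (hπ : π ∈ ViP S n) (h : ℕ) (s : S) : Wv G π h s ≤ Wv G πs h s := by
  have := (hπs h s).2 π hπ
  rwa [sInf_val_eq hm hπ h s, sInf_val_eq hm (hπs h s).1 h s] at this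

lemma piStar_iff (hm : 0 < m) (hπs : ∀ h s, πs ∈ PiStar G h s)
    {π} (h : ℕ) (s : S) :
    π ∈ PiStar G h s ↔ π ∈ ViP S n ∧ Wv G π h s = Wv G πs h s := by
  constructor
  · intro hp
    refine ⟨hp.1, le_antisymm (Wv_le_Wv_star hm hπs hp.1 h s) ?_⟩
    have := hp.2 πs (hπs h s).1
    rwa [sInf_val_eq hm (hπs h s).1, sInf_val_eq hm hp.1] at this
  · rintro ⟨h1, h2⟩
    refine ⟨h1, fun π' hπ' => ?_⟩
    rw [sInf_val_eq hm hπ', sInf_val_eq hm h1, h2]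
    exact Wv_le_Wv_star hm hπs hπ' h s

end Char

/-! ### the stage-local description of maximin policies -/

noncomputable def Qst (G : MarkovGame S n m) (π0 : ℕ → S → Fin n → ℝ)
    (h : ℕ) (s : S) (a : Fin n) (b : Fin m) : ℝ :=
  G.R h s a b + ∑ s', G.P h s a b s' * Wv G π0 (h + 1) s'

def Astar (G : MarkovGame S n m) (π0 : ℕ → S → Fin n → ℝ) (h : ℕ) (s : S) :
    Set (Fin n → ℝ) :=
  {p | p ∈ stdSimplex ℝ (Fin n) ∧
    (h < G.H → ∀ b, Wv G π0 h s ≤ ∑ a, p a * Qst G π0 h s a b)}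

lemma Wv_pos' {π π0 : ℕ → S → Fin n → ℝ} {h : ℕ} (s : S)
    (hnext : ∀ s', Wv G π (h + 1) s' = Wv G π0 (h + 1) s') (hh : h < G.H) :
    Wv G π h s = sInf (Set.range fun b => ∑ a, π h s a * Qst G π0 h s a b) := by
  rw [Wv_pos G π s hh]
  have he : (fun b : Fin m => ∑ a, π h s a *
      (G.R h s a b + ∑ s', G.P h s a b s' * Wv G π (h + 1) s'))
      = fun b => ∑ a, π h s a * Qst G π0 h s a b := by
    funext b
    refine Finset.sum_congr rfl fun a _ => ?_
    unfold Qst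
    simp only [hnext]
  rw [he]

section Char2

variable {πs : ℕ → S → Fin n → ℝ}

lemma mem_Astar_self (hπs : ∀ h s, πs ∈ PiStar G h s) (h : ℕ) (s : S) :
    πs h s ∈ Astar G πs h s := by
  refine ⟨(hπs h s).1 h s, fun hh b => ?_⟩
  rw [Wv_pos' s (fun s' => rfl) hh]
  exact sInf_range_le _ b

lemma Wv_eq_of_local (hm : 0 < m) (hπs : ∀ h s, πs ∈ PiStar G h s)
    {π} (hπV : π ∈ ViP S n) (h : ℕ) (s : S)
    (hloc : π h s ∈ Astar G πs h s)
    (hnext : ∀ s', Wv G π (h + 1) s' = Wv G πs (h + 1) s') :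
    Wv G π h s = Wv G πs h s := by
  haveI : Nonempty (Fin m) := ⟨⟨0, hm⟩⟩
  by_cases hh : h < G.H
  · refine le_antisymm (Wv_le_Wv_star hm hπs hπV h s) ?_
    rw [Wv_pos' s hnext hh]
    exact le_sInf_range _ _ (fun b => hloc.2 hh b)
  · rw [Wv_neg G π s hh, Wv_neg G πs s hh]

lemma mem_Astar_of_Wv (hπs : ∀ h s, πs ∈ PiStar G h s) {π} (hπV : π ∈ ViP S n)
    (k : ℕ) (s' : S) (hcur : Wv G π k s' = Wv G πs k s')
    (hnext : ∀ s'', Wv G π (k + 1) s'' = Wv G πs (k + 1) s'') :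
    π k s' ∈ Astar G πs k s' := by
  refine ⟨hπV k s', fun hh b => ?_⟩
  rw [← hcur, Wv_pos' s' hnext hh]
  exact sInf_range_le _ b

lemma tilde_local_mp (hm : 0 < m) (hπs : ∀ h s, πs ∈ PiStar G h s)
    {π} {h : ℕ} {s : S} (hmem : π ∈ TildePi G h s) :
    π ∈ ViP S n ∧ π h s ∈ Astar G πs h s ∧
      ∀ k, h < k → ∀ s', π k s' ∈ Astar G πs k s' := by
  have hV : π ∈ ViP S n := hmem.1.1
  have hlater : ∀ k, h < k → ∀ s', π ∈ PiStar G k s' := by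
    have := hmem.2
    simp only [Set.mem_iInter] at this
    exact this
  have hWvlater : ∀ k, h < k → ∀ s', Wv G π k s' = Wv G πs k s' :=
    fun k hk s' => ((piStar_iff hm hπs k s').mp (hlater k hk s')).2
  have hWvh : Wv G π h s = Wv G πs h s := ((piStar_iff hm hπs h s).mp hmem.1).2
  refine ⟨hV, mem_Astar_of_Wv hπs hV h s hWvh (fun s'' => hWvlater (h+1) (by omega) s''), ?_⟩
  intro k hk s'
  exact mem_Astar_of_Wv hπs hV k s' (hWvlater k hk s')
    (fun s'' => hWvlater (k+1) (by omega) s'')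

lemma tilde_local_mpr (hm : 0 < m) (hπs : ∀ h s, πs ∈ PiStar G h s)
    {π} {h : ℕ} {s : S} (hV : π ∈ ViP S n) (h1 : π h s ∈ Astar G πs h s)
    (h2 : ∀ k, h < k → ∀ s', π k s' ∈ Astar G πs k s') :
    π ∈ TildePi G h s := by
  have key : ∀ d k, G.H ≤ k + d → h < k → ∀ s', Wv G π k s' = Wv G πs k s' := by
    intro d
    induction d with
    | zero => intro k hk _ s'; rw [Wv_neg G π s' (by omega), Wv_neg G πs s' (by omega)]
    | succ d ih =>
      intro k hk hhk s'
      exact Wv_eq_of_local hm hπs hV k s' (h2 k hhk s')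
        (fun s'' => ih (k+1) (by omega) (by omega) s'')
  have hall : ∀ k, h < k → ∀ s', Wv G π k s' = Wv G πs k s' :=
    fun k hk s' => key G.H k (by omega) hk s'
  have hWvh : Wv G π h s = Wv G πs h s :=
    Wv_eq_of_local hm hπs hV h s h1 (fun s' => hall (h+1) (by omega) s')
  refine ⟨(piStar_iff hm hπs h s).mpr ⟨hV, hWvh⟩, ?_⟩
  simp only [Set.mem_iInter]
  intro k hk s'
  exact (piStar_iff hm hπs k s').mpr ⟨hV, hall k hk s'⟩

lemma mem_piStar_of_local (hm : 0 < m) (hπs : ∀ h s, πs ∈ PiStar G h s)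
    {π} (hV : π ∈ ViP S n) (hall : ∀ h s, π h s ∈ Astar G πs h s) :
    ∀ h s, π ∈ PiStar G h s :=
  fun h s => (tilde_local_mpr hm hπs hV (hall h s) (fun k _ s' => hall k s')).1

lemma tilde_step {π} {h : ℕ} {s : S} (hmem : π ∈ TildePi G h s) (s' : S) :
    π ∈ TildePi G (h + 1) s' := by
  have h2 := hmem.2
  simp only [Set.mem_iInter] at h2
  refine ⟨h2 (h+1) (by omega) s', ?_⟩
  simp only [Set.mem_iInter]
  intro k hk s''
  exact h2 k (by omega) s''

end Char2

section Part3
variable {G : MarkovGame S n m}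

noncomputable def Lv (G : MarkovGame S n m) (π0 : ℕ → S → Fin n → ℝ)
    (ν : ℕ → S → Fin m → ℝ) (h : ℕ) (s : S) : ℝ :=
  if h < G.H then
    sInf ((fun p => ∑ a, ∑ b, p a * ν h s b *
      (G.Re h s a b + ∑ s', G.P h s a b s' * Lv G π0 ν (h + 1) s')) '' Astar G π0 h s)
  else 0
termination_by G.H - h
decreasing_by omega

lemma Lv_pos (G : MarkovGame S n m) (π0) (ν) {h : ℕ} (s : S) (hh : h < G.H) :
    Lv G π0 ν h s = sInf ((fun p => ∑ a, ∑ b, p a * ν h s b *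
      (G.Re h s a b + ∑ s', G.P h s a b s' * Lv G π0 ν (h + 1) s')) '' Astar G π0 h s) := by
  rw [Lv]; simp [hh]

lemma Lv_neg (G : MarkovGame S n m) (π0) (ν) {h : ℕ} (s : S) (hh : ¬ h < G.H) :
    Lv G π0 ν h s = 0 := by rw [Lv]; simp [hh]

lemma isCompact_Astar (G : MarkovGame S n m) (π0) (h : ℕ) (s : S) :
    IsCompact (Astar G π0 h s) := by
  have hA : Astar G π0 h s = stdSimplex ℝ (Fin n) ∩
      {p | h < G.H → ∀ b, Wv G π0 h s ≤ ∑ a, p a * Qst G π0 h s a b} := rfl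
  rw [hA]
  refine (isCompact_stdSimplex ℝ (Fin n)).inter_right ?_
  by_cases hh : h < G.H
  · have : {p : Fin n → ℝ | h < G.H → ∀ b, Wv G π0 h s ≤ ∑ a, p a * Qst G π0 h s a b}
        = ⋂ b, {p : Fin n → ℝ | Wv G π0 h s ≤ ∑ a, p a * Qst G π0 h s a b} := by
      ext p; simp [hh]
    rw [this]
    refine isClosed_iInter fun b => ?_
    exact isClosed_le continuous_const
      (continuous_finset_sum _ fun a _ => (continuous_apply a).mul continuous_const)
  · have : {p : Fin n → ℝ | h < G.H → ∀ b, Wv G π0 h s ≤ ∑ a, p a * Qst G π0 h s a b}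
        = Set.univ := by
      ext p; simp [hh]
    rw [this]; exact isClosed_univ

lemma step_bound (G : MarkovGame S n m) (RW : ℕ → S → Fin n → Fin m → ℝ)
    (h : ℕ) (s : S) (a : Fin n) (b : Fin m) {V : S → ℝ} {B : ℝ}
    (hV : ∀ s', |V s'| ≤ B) :
    |RW h s a b + ∑ s', G.P h s a b s' * V s'| ≤ Mk G RW h + B := by
  calc |RW h s a b + ∑ s', G.P h s a b s' * V s'|
      ≤ |RW h s a b| + |∑ s', G.P h s a b s' * V s'| := abs_add_le _ _
    _ ≤ Mk G RW h + B := by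
      refine add_le_add (abs_le_Mk G RW h s a b) ?_
      calc |∑ s', G.P h s a b s' * V s'| ≤ ∑ s', |G.P h s a b s' * V s'| :=
            Finset.abs_sum_le_sum_abs _ _
        _ ≤ ∑ s', G.P h s a b s' * B := by
            refine Finset.sum_le_sum fun s' _ => ?_
            rw [abs_mul, abs_of_nonneg (G.P_nonneg h s a b s')]
            exact mul_le_mul_of_nonneg_left (hV s') (G.P_nonneg h s a b s')
        _ = B := by rw [← Finset.sum_mul, G.P_sum, one_mul]

variable {πs : ℕ → S → Fin n → ℝ}

lemma Lv_bound (hπs : ∀ h s, πs ∈ PiStar G h s) {ν} (hν : ν ∈ ExP S m) :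
    ∀ h s, |Lv G πs ν h s| ≤ Bnd G G.Re h := by
  have main : ∀ d h s, G.H ≤ h + d → |Lv G πs ν h s| ≤ Bnd G G.Re h := by
    intro d
    induction d with
    | zero => intro h s hd; rw [Lv_neg G πs ν s (by omega)]; simpa using Bnd_nonneg G G.Re h
    | succ d ih =>
      intro h s hd
      by_cases hh : h < G.H
      · rw [Lv_pos G πs ν s hh]
        refine abs_sInf_le (Set.nonempty_of_mem
          (Set.mem_image_of_mem _ (mem_Astar_self hπs h s))) ?_
        rintro x ⟨p, hp, rfl⟩
        rw [Bnd_succ G G.Re hh]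
        exact bilin_bound hp.1 (hν h s) fun a b =>
          step_bound G G.Re h s a b fun s' => ih (h+1) s' (by omega)
      · rw [Lv_neg G πs ν s hh]; simpa using Bnd_nonneg G G.Re h
  intro h s; exact main (G.H - h + 1) h s (by omega)

lemma Lv_le_val (hm : 0 < m) (hπs : ∀ h s, πs ∈ PiStar G h s) {ν} (hν : ν ∈ ExP S m) :
    ∀ (h : ℕ) (s : S) (π), π ∈ TildePi G h s → Lv G πs ν h s ≤ Val G G.Re π ν h s := by
  have main : ∀ d h s π, G.H ≤ h + d → π ∈ TildePi G h s →
      Lv G πs ν h s ≤ Val G G.Re π ν h s := by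
    intro d
    induction d with
    | zero =>
      intro h s π hd _
      rw [Lv_neg G πs ν s (by omega), Val_neg G G.Re π ν s (by omega)]
    | succ d ih =>
      intro h s π hd hmem
      by_cases hh : h < G.H
      · have hloc := tilde_local_mp hm hπs hmem
        have hπV : π ∈ ViP S n := hloc.1
        have hbdd : BddBelow ((fun p => ∑ a, ∑ b, p a * ν h s b *
            (G.Re h s a b + ∑ s', G.P h s a b s' * Lv G πs ν (h + 1) s'))
              '' Astar G πs h s) := by
          refine ⟨-(Bnd G G.Re h), ?_⟩
          rintro x ⟨p, hp, rfl⟩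
          have := bilin_bound hp.1 (hν h s) fun a b =>
            step_bound G G.Re h s a b fun s' => Lv_bound hπs hν (h+1) s'
          rw [← Bnd_succ G G.Re hh] at this
          exact neg_le_of_abs_le this
        calc Lv G πs ν h s
            = sInf ((fun p => ∑ a, ∑ b, p a * ν h s b *
                (G.Re h s a b + ∑ s', G.P h s a b s' * Lv G πs ν (h + 1) s'))
                  '' Astar G πs h s) := Lv_pos G πs ν s hh
          _ ≤ ∑ a, ∑ b, π h s a * ν h s b *
                (G.Re h s a b + ∑ s', G.P h s a b s' * Lv G πs ν (h + 1) s') :=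
              csInf_le hbdd ⟨π h s, hloc.2.1, rfl⟩
          _ ≤ ∑ a, ∑ b, π h s a * ν h s b *
                (G.Re h s a b + ∑ s', G.P h s a b s' * Val G G.Re π ν (h + 1) s') := by
              refine Finset.sum_le_sum fun a _ => Finset.sum_le_sum fun b _ => ?_
              refine mul_le_mul_of_nonneg_left ?_
                (mul_nonneg ((hπV h s).1 a) ((hν h s).1 b))
              refine add_le_add le_rfl (Finset.sum_le_sum fun s' _ => ?_)
              exact mul_le_mul_of_nonneg_left
                (ih (h+1) s' π (by omega) (tilde_step hmem s')) (G.P_nonneg h s a b s')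
          _ = Val G G.Re π ν h s := (Val_pos G G.Re π ν s hh).symm
      · rw [Lv_neg G πs ν s hh, Val_neg G G.Re π ν s hh]
  intro h s π hmem; exact main (G.H - h + 1) h s π (by omega) hmem

lemma exists_pihat (hm : 0 < m) (hπs : ∀ h s, πs ∈ PiStar G h s)
    {ν} (hν : ν ∈ ExP S m) :
    ∃ πh, (∀ h s, πh ∈ PiStar G h s) ∧
      ∀ h s, Val G G.Re πh ν h s = Lv G πs ν h s := by
  set F : ℕ → S → (Fin n → ℝ) → ℝ := fun h s p => ∑ a, ∑ b, p a * ν h s b *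
    (G.Re h s a b + ∑ s', G.P h s a b s' * Lv G πs ν (h + 1) s') with hF
  have hmin : ∀ (h : ℕ) (s : S), ∃ p ∈ Astar G πs h s,
      ∀ q ∈ Astar G πs h s, F h s p ≤ F h s q := by
    intro h s
    have hc : Continuous (F h s) := by
      refine continuous_finset_sum _ fun a _ => ?_
      exact continuous_finset_sum _ fun b _ =>
        ((continuous_apply a).mul continuous_const).mul continuous_const
    obtain ⟨p, hp, hpmin⟩ := (isCompact_Astar G πs h s).exists_isMinOn
      ⟨πs h s, mem_Astar_self hπs h s⟩ hc.continuousOn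
    exact ⟨p, hp, fun q hq => isMinOn_iff.mp hpmin q hq⟩
  choose ph hph hphmin using hmin
  refine ⟨fun h s => ph h s, mem_piStar_of_local hm hπs
    (fun h s => (hph h s).1) (fun h s => hph h s), ?_⟩
  have main : ∀ d h s, G.H ≤ h + d →
      Val G G.Re (fun h s => ph h s) ν h s = Lv G πs ν h s := by
    intro d
    induction d with
    | zero => intro h s hd; rw [Val_neg _ _ _ _ s (by omega), Lv_neg _ _ _ s (by omega)]
    | succ d ih =>
      intro h s hd
      by_cases hh : h < G.H
      · have hIH : ∀ s', Val G G.Re (fun h s => ph h s) ν (h+1) s' = Lv G πs ν (h+1) s' :=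
          fun s' => ih (h+1) s' (by omega)
        rw [Val_pos _ _ _ _ s hh]
        simp only [hIH]
        have hval : (∑ a, ∑ b, ph h s a * ν h s b *
            (G.Re h s a b + ∑ s', G.P h s a b s' * Lv G πs ν (h + 1) s')) = F h s (ph h s) := rfl
        rw [hval, Lv_pos G πs ν s hh]
        refine le_antisymm (le_csInf ⟨_, ⟨ph h s, hph h s, rfl⟩⟩ ?_)
          (csInf_le ⟨F h s (ph h s), ?_⟩ ⟨ph h s, hph h s, rfl⟩)
        · rintro x ⟨q, hq, rfl⟩
          exact hphmin h s q hq
        · rintro x ⟨q, hq, rfl⟩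
          exact hphmin h s q hq
      · rw [Val_neg _ _ _ _ s hh, Lv_neg _ _ _ s hh]
  intro h s; exact main (G.H - h + 1) h s (by omega)

lemma sInf_tilde_eq (hm : 0 < m) (hπs : ∀ h s, πs ∈ PiStar G h s)
    {ν} (hν : ν ∈ ExP S m) (h : ℕ) (s : S) :
    sInf ((fun π => Val G G.Re π ν h s) '' TildePi G h s) = Lv G πs ν h s := by
  obtain ⟨πh, hπhP, hπhV⟩ := exists_pihat hm hπs hν
  have hπht : πh ∈ TildePi G h s := by
    refine ⟨hπhP h s, ?_⟩
    simp only [Set.mem_iInter]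
    exact fun k _ s' => hπhP k s'
  refine le_antisymm (csInf_le ⟨Lv G πs ν h s, ?_⟩ ⟨πh, hπht, hπhV h s⟩)
    (le_csInf ⟨_, πh, hπht, rfl⟩ ?_) <;>
  · rintro x ⟨π, hπt, rfl⟩
    exact Lv_le_val hm hπs hν h s π hπt

end Part3
end MPV

open MPV

/-- a Markov-perfect VISER pair `(π*, ν*)` (VISER at every stage game)
is a VISER solution of the whole game from the initial distribution `μ`: `π*`
maximizes the victim's worst-case value and `ν*` best-responds in the worst case
to the set of Markov-perfect maximin victim policies. -/
theorem MPVISER_is_VISER (G : MarkovGame S n m)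
    (hn : 0 < n) (hm : 0 < m)
    (μ : S → ℝ) (hμ0 : ∀ s, 0 ≤ μ s) (hμ1 : ∑ s, μ s = 1)
    (πs : ℕ → S → Fin n → ℝ) (νs : ℕ → S → Fin m → ℝ)
    (hπ : ∀ h s, πs ∈ PiStar G h s) (hν : ∀ h s, νs ∈ NStar G h s) :
    (πs ∈ ViP S n ∧ ∀ π' ∈ ViP S n,
      sInf ((fun ν => ∑ s, μ s * Val G G.R π' ν 0 s) '' ExP S m) ≤
        sInf ((fun ν => ∑ s, μ s * Val G G.R πs ν 0 s) '' ExP S m)) ∧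
    (νs ∈ ExP S m ∧ ∀ ν' ∈ ExP S m,
      sInf ((fun π => ∑ s, μ s * Val G G.Re π ν' 0 s) ''
          (⋂ (h : ℕ) (s : S), PiStar G h s)) ≤
        sInf ((fun π => ∑ s, μ s * Val G G.Re π νs 0 s) ''
          (⋂ (h : ℕ) (s : S), PiStar G h s))) := by
  classical
  rcases isEmpty_or_nonempty S with hS | hS
  · exact absurd hμ1 (by simp)
  obtain ⟨s₀⟩ := hS
  have hπsV : πs ∈ ViP S n := (hπ 0 s₀).1
  have hνsE : νs ∈ ExP S m := (hν 0 s₀).1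
  constructor
  · -- victim part
    refine ⟨hπsV, fun π' hπ' => ?_⟩
    obtain ⟨νh, hνhE, hνh⟩ := exists_br G hm π'
    have step1 : sInf ((fun ν => ∑ s, μ s * Val G G.R π' ν 0 s) '' ExP S m)
        ≤ ∑ s, μ s * Wv G π' 0 s := by
      have hb : BddBelow ((fun ν => ∑ s, μ s * Val G G.R π' ν 0 s) '' ExP S m) := by
        refine ⟨∑ s, μ s * Wv G π' 0 s, ?_⟩
        rintro x ⟨ν, hνE, rfl⟩
        exact Finset.sum_le_sum fun s _ =>
          mul_le_mul_of_nonneg_left (Wv_le_val hm hπ' hνE 0 s) (hμ0 s)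
      refine csInf_le hb ⟨νh, hνhE, ?_⟩
      simp only [hνh]
    have step2 : ∑ s, μ s * Wv G π' 0 s ≤ ∑ s, μ s * Wv G πs 0 s :=
      Finset.sum_le_sum fun s _ =>
        mul_le_mul_of_nonneg_left (Wv_le_Wv_star hm hπ hπ' 0 s) (hμ0 s)
    have step3 : ∑ s, μ s * Wv G πs 0 s
        ≤ sInf ((fun ν => ∑ s, μ s * Val G G.R πs ν 0 s) '' ExP S m) := by
      refine le_csInf ⟨_, νh, hνhE, rfl⟩ ?_
      rintro x ⟨ν, hνE, rfl⟩
      exact Finset.sum_le_sum fun s _ =>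
        mul_le_mul_of_nonneg_left (Wv_le_val hm hπsV hνE 0 s) (hμ0 s)
    linarith
  · -- exploiter part
    refine ⟨hνsE, fun ν' hν' => ?_⟩
    obtain ⟨πh, hπhP, hπhV⟩ := exists_pihat hm hπ hν'
    have hKsub : ∀ π, π ∈ (⋂ (h : ℕ) (s : S), PiStar G h s) →
        ∀ h s, π ∈ TildePi G h s := by
      intro π hπK h s
      simp only [Set.mem_iInter] at hπK
      refine ⟨hπK h s, ?_⟩
      simp only [Set.mem_iInter]
      exact fun k _ s' => hπK k s'
    have hπhK : πh ∈ ⋂ (h : ℕ) (s : S), PiStar G h s := by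
      simp only [Set.mem_iInter]; exact fun h s => hπhP h s
    have hπsK : πs ∈ ⋂ (h : ℕ) (s : S), PiStar G h s := by
      simp only [Set.mem_iInter]; exact fun h s => hπ h s
    have hlb : ∀ x ∈ ((fun π => ∑ s, μ s * Val G G.Re π ν' 0 s) ''
        (⋂ (h : ℕ) (s : S), PiStar G h s)), -(Bnd G G.Re 0) ≤ x := by
      rintro x ⟨π, hπK, rfl⟩
      have hπV : π ∈ ViP S n := by
        simp only [Set.mem_iInter] at hπK; exact (hπK 0 s₀).1
      calc -(Bnd G G.Re 0) = ∑ s, μ s * (-(Bnd G G.Re 0)) := by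
            rw [← Finset.sum_mul, hμ1, one_mul]
        _ ≤ ∑ s, μ s * Val G G.Re π ν' 0 s :=
            Finset.sum_le_sum fun s _ => mul_le_mul_of_nonneg_left
              (neg_le_of_abs_le (val_bound G G.Re hπV hν' 0 s)) (hμ0 s)
    have step1 : sInf ((fun π => ∑ s, μ s * Val G G.Re π ν' 0 s) ''
        (⋂ (h : ℕ) (s : S), PiStar G h s)) ≤ ∑ s, μ s * Lv G πs ν' 0 s := by
      refine csInf_le ⟨-(Bnd G G.Re 0), hlb⟩ ⟨πh, hπhK, ?_⟩
      simp only [hπhV]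
    have step2 : ∑ s, μ s * Lv G πs ν' 0 s ≤ ∑ s, μ s * Lv G πs νs 0 s := by
      refine Finset.sum_le_sum fun s _ => mul_le_mul_of_nonneg_left ?_ (hμ0 s)
      have := (hν 0 s).2 ν' hν'
      rwa [sInf_tilde_eq hm hπ hν' 0 s, sInf_tilde_eq hm hπ hνsE 0 s] at this
    have step3 : ∑ s, μ s * Lv G πs νs 0 s
        ≤ sInf ((fun π => ∑ s, μ s * Val G G.Re π νs 0 s) ''
            (⋂ (h : ℕ) (s : S), PiStar G h s)) := by
      refine le_csInf ⟨_, πs, hπsK, rfl⟩ ?_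
      rintro x ⟨π, hπK, rfl⟩
      exact Finset.sum_le_sum fun s _ => mul_le_mul_of_nonneg_left
        (Lv_le_val hm hπ hνsE 0 s π (hKsub π hπK 0 s)) (hμ0 s)
    linarith
end
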